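/- Let α > 0 and n ∈ ℤ. Then ∫_{‖x‖ ≤ p^n} ‖x‖^{α-1} dμ(x) = ((1 - p^{-1})/(1 - p^{-α})) · p^{αn}. -/

import Mathlib

open MeasureTheory

section PadicHaarAux

variable (p : ℕ) [hp : Fact p.Prime]

private lemma padicAux_one_lt : (1:ℝ) < (p:ℝ) := by exact_mod_cast hp.out.one_lt

private lemma padicAux_pos : (0:ℝ) < (p:ℝ) := lt_trans one_pos (padicAux_one_lt p)

/-- Coset decomposition of the ball of radius `p^(k+1)` into `p` translates of the ball of
radius `p^k`. -/
private lemma padicAux_ball_eq (k : ℤ) :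
    {x : ℚ_[p] | ‖x‖ ≤ (p:ℝ)^(k+1)} =
      ⋃ i : Fin p, (fun x : ℚ_[p] => x + -((i : ℚ_[p]) * (p:ℚ_[p])^(-(k+1)))) ⁻¹'
        {x : ℚ_[p] | ‖x‖ ≤ (p:ℝ)^k} := by
  have hq1 : (1:ℝ) < p := padicAux_one_lt p
  have hq0 : (0:ℝ) < p := padicAux_pos p
  have hpne : (p:ℚ_[p]) ≠ 0 := by
    exact_mod_cast (Nat.cast_ne_zero (R := ℚ_[p])).mpr hp.out.pos.ne'
  have key : (p:ℚ_[p])^(-(k+1)) * (p:ℚ_[p])^(k+1) = 1 := by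
    rw [← zpow_add₀ hpne, show (-(k+1)) + (k+1) = 0 by ring, zpow_zero]
  ext x
  simp only [Set.mem_setOf_eq, Set.mem_iUnion, Set.mem_preimage]
  constructor
  · intro hx
    have hz : ‖(p:ℚ_[p])^(k+1) * x‖ ≤ 1 := by
      rw [norm_mul, Padic.norm_p_zpow]
      calc (p:ℝ)^(-(k+1)) * ‖x‖ ≤ (p:ℝ)^(-(k+1)) * (p:ℝ)^(k+1) :=
            mul_le_mul_of_nonneg_left hx (zpow_nonneg hq0.le _)
        _ = 1 := by rw [← zpow_add₀ hq0.ne', show (-(k+1)) + (k+1) = 0 by ring, zpow_zero]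
    set y : ℤ_[p] := ⟨(p:ℚ_[p])^(k+1) * x, hz⟩ with hy
    refine ⟨⟨y.appr 1, by simpa using y.appr_lt 1⟩, ?_⟩
    have hnorm : ‖y - (y.appr 1 : ℤ_[p])‖ ≤ (p:ℝ)^(-1 : ℤ) := by
      rw [show ((-1 : ℤ) = -(1:ℕ)) by norm_num,
        PadicInt.norm_le_pow_iff_mem_span_pow]
      simpa using y.appr_spec 1
    have hqn : ‖(p:ℚ_[p])^(k+1) * x - (y.appr 1 : ℚ_[p])‖ ≤ (p:ℝ)^(-1:ℤ) := by
      have : ((y - (y.appr 1 : ℤ_[p]) : ℤ_[p]) : ℚ_[p])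
          = (p:ℚ_[p])^(k+1) * x - (y.appr 1 : ℚ_[p]) := by
        push_cast [hy]
        exact congrArg (fun t : ℚ_[p] => (p:ℚ_[p])^(k+1) * x - t) (PadicInt.coe_natCast _)
      rw [← this, PadicInt.padic_norm_e_of_padicInt]
      exact hnorm
    have heq : x + -(((y.appr 1 : ℕ) : ℚ_[p]) * (p:ℚ_[p])^(-(k+1)))
        = (p:ℚ_[p])^(-(k+1)) * ((p:ℚ_[p])^(k+1) * x - (y.appr 1 : ℚ_[p])) := by
      linear_combination (-x) * key
    rw [heq, norm_mul, Padic.norm_p_zpow]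
    calc (p:ℝ)^(-(-(k+1))) * ‖(p:ℚ_[p])^(k+1) * x - (y.appr 1 : ℚ_[p])‖
        ≤ (p:ℝ)^(k+1) * (p:ℝ)^(-1:ℤ) := by
          rw [neg_neg]
          exact mul_le_mul_of_nonneg_left hqn (zpow_nonneg hq0.le _)
      _ = (p:ℝ)^k := by rw [← zpow_add₀ hq0.ne']; ring_nf
  · rintro ⟨i, hi⟩
    have hcle : ‖((i:ℕ) : ℚ_[p]) * (p:ℚ_[p])^(-(k+1))‖ ≤ (p:ℝ)^(k+1) := by
      rw [norm_mul, Padic.norm_p_zpow, neg_neg]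
      have h1 : ‖((i:ℕ) : ℚ_[p])‖ ≤ 1 := by
        have := Padic.norm_int_le_one (p := p) (i : ℤ)
        push_cast at this
        exact this
      calc ‖((i:ℕ) : ℚ_[p])‖ * (p:ℝ)^(k+1) ≤ 1 * (p:ℝ)^(k+1) :=
            mul_le_mul_of_nonneg_right h1 (zpow_nonneg hq0.le _)
        _ = (p:ℝ)^(k+1) := one_mul _
    have hxx : x = (x + -((i:ℚ_[p]) * (p:ℚ_[p])^(-(k+1)))) + (i:ℚ_[p]) * (p:ℚ_[p])^(-(k+1)) := by
      ring
    calc ‖x‖ = ‖(x + -((i:ℚ_[p]) * (p:ℚ_[p])^(-(k+1)))) + (i:ℚ_[p]) * (p:ℚ_[p])^(-(k+1))‖ := by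
          rw [← hxx]
      _ ≤ max ‖x + -((i:ℚ_[p]) * (p:ℚ_[p])^(-(k+1)))‖ ‖(i:ℚ_[p]) * (p:ℚ_[p])^(-(k+1))‖ :=
          Padic.nonarchimedean _ _
      _ ≤ (p:ℝ)^(k+1) := by
          apply max_le
          · exact hi.trans (zpow_le_zpow_right₀ hq1.le (by omega))
          · exact hcle

private lemma padicAux_disjoint (k : ℤ) :
    Pairwise (Function.onFun Disjoint (fun i : Fin p =>
      (fun x : ℚ_[p] => x + -((i : ℚ_[p]) * (p:ℚ_[p])^(-(k+1)))) ⁻¹'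
        {x : ℚ_[p] | ‖x‖ ≤ (p:ℝ)^k})) := by
  have hq1 : (1:ℝ) < p := padicAux_one_lt p
  have hq0 : (0:ℝ) < p := padicAux_pos p
  intro i j hij
  rw [Function.onFun, Set.disjoint_left]
  intro x hxi hxj
  simp only [Set.mem_preimage, Set.mem_setOf_eq] at hxi hxj
  have hdiff : ‖((i:ℚ_[p]) - (j:ℚ_[p])) * (p:ℚ_[p])^(-(k+1))‖ ≤ (p:ℝ)^k := by
    have : ((i:ℚ_[p]) - (j:ℚ_[p])) * (p:ℚ_[p])^(-(k+1))
        = (x + -((j:ℚ_[p]) * (p:ℚ_[p])^(-(k+1)))) - (x + -((i:ℚ_[p]) * (p:ℚ_[p])^(-(k+1)))) := by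
      ring
    rw [this]
    rw [sub_eq_add_neg]
    calc ‖(x + -((j:ℚ_[p]) * (p:ℚ_[p])^(-(k+1)))) + -(x + -((i:ℚ_[p]) * (p:ℚ_[p])^(-(k+1))))‖
        ≤ max ‖x + -((j:ℚ_[p]) * (p:ℚ_[p])^(-(k+1)))‖ ‖-(x + -((i:ℚ_[p]) * (p:ℚ_[p])^(-(k+1))))‖ :=
          Padic.nonarchimedean _ _
      _ ≤ (p:ℝ)^k := by rw [norm_neg]; exact max_le hxj hxi
  have hint : ‖((i:ℚ_[p]) - (j:ℚ_[p]))‖ = 1 := by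
    have hne : ((i:ℤ) - (j:ℤ)) ≠ 0 := by
      simp only [sub_ne_zero]
      exact_mod_cast fun h => hij (Fin.ext (by exact_mod_cast h))
    have hndvd : ¬ ((p:ℤ) ∣ ((i:ℤ) - (j:ℤ))) := by
      intro hdvd
      have habs : |(i:ℤ) - (j:ℤ)| < p := by
        have hi := i.isLt
        have hj := j.isLt
        rw [abs_sub_lt_iff]
        omega
      have := Int.eq_zero_of_abs_lt_dvd hdvd habs
      exact hne this
    have h1 : ‖(((i:ℤ) - (j:ℤ) : ℤ) : ℚ_[p])‖ = 1 := by
      have hle := Padic.norm_int_le_one (p := p) ((i:ℤ) - (j:ℤ))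
      have hlt := (Padic.norm_intCast_lt_one_iff (p := p) (k := (i:ℤ) - (j:ℤ))).not.mpr hndvd -- maybe wrong
      rcases lt_or_eq_of_le hle with h | h
      · exact absurd h (by simpa using hlt)
      · exact h
    push_cast at h1
    exact h1
  rw [norm_mul, hint, one_mul, Padic.norm_p_zpow, neg_neg] at hdiff
  have : (p:ℝ)^k < (p:ℝ)^(k+1) := zpow_lt_zpow_right₀ hq1 (by omega)
  linarith

end PadicHaarAux

section PadicHaarMeasure

variable (p : ℕ) [hp : Fact p.Prime]
  [MeasurableSpace ℚ_[p]] [BorelSpace ℚ_[p]]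
  (μ : Measure ℚ_[p]) [μ.IsAddHaarMeasure]

private lemma padicAux_ball_measurable (r : ℝ) :
    MeasurableSet {x : ℚ_[p] | ‖x‖ ≤ r} :=
  measurableSet_le measurable_norm measurable_const

private lemma padicAux_step (k : ℤ) :
    μ {x : ℚ_[p] | ‖x‖ ≤ (p:ℝ)^(k+1)} = p * μ {x : ℚ_[p] | ‖x‖ ≤ (p:ℝ)^k} := by
  rw [padicAux_ball_eq p k]
  rw [measure_iUnion (padicAux_disjoint p k) (fun i =>
    (padicAux_ball_measurable p _).preimage (measurable_id.add_const _))]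
  have hterm : ∀ i : Fin p,
      μ ((fun x : ℚ_[p] => x + -((i : ℚ_[p]) * (p:ℚ_[p])^(-(k+1)))) ⁻¹'
        {x : ℚ_[p] | ‖x‖ ≤ (p:ℝ)^k}) = μ {x : ℚ_[p] | ‖x‖ ≤ (p:ℝ)^k} := fun i =>
    measure_preimage_add_right μ _ _
  rw [tsum_congr hterm, tsum_fintype]
  simp [Finset.sum_const, mul_comm]

private lemma padicAux_ball_measure (hμ : μ {x : ℚ_[p] | ‖x‖ ≤ 1} = 1) (k : ℤ) :
    μ {x : ℚ_[p] | ‖x‖ ≤ (p:ℝ)^k} = (p:ENNReal)^k := by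
  have hp0 : (p:ENNReal) ≠ 0 := by
    exact_mod_cast hp.out.pos.ne'
  have hptop : (p:ENNReal) ≠ ⊤ := ENNReal.natCast_ne_top p
  induction k using Int.induction_on with
  | zero => simpa using hμ
  | succ k ih =>
      rw [padicAux_step p μ k, ih, ENNReal.zpow_add hp0 hptop, zpow_one]
      ring
  | pred k ih =>
      have hstep := padicAux_step p μ (-(k:ℤ)-1)
      rw [show (-(k:ℤ)-1+1) = -(k:ℤ) by ring, ih] at hstep
      have hcancel : (p:ENNReal)⁻¹ * (p:ENNReal) = 1 := ENNReal.inv_mul_cancel hp0 hptop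
      calc μ {x : ℚ_[p] | ‖x‖ ≤ (p:ℝ)^(-(k:ℤ)-1)}
          = ((p:ENNReal)⁻¹ * (p:ENNReal)) * μ {x : ℚ_[p] | ‖x‖ ≤ (p:ℝ)^(-(k:ℤ)-1)} := by
            rw [hcancel, one_mul]
        _ = (p:ENNReal)⁻¹ * ((p:ENNReal) * μ {x : ℚ_[p] | ‖x‖ ≤ (p:ℝ)^(-(k:ℤ)-1)}) := by
            rw [mul_assoc]
        _ = (p:ENNReal)⁻¹ * (p:ENNReal)^(-(k:ℤ)) := by rw [← hstep]
        _ = (p:ENNReal)^((-1:ℤ)) * (p:ENNReal)^(-(k:ℤ)) := by rw [zpow_neg_one]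
        _ = (p:ENNReal)^(-(k:ℤ)-1) := by
            rw [← ENNReal.zpow_add hp0 hptop]
            ring_nf

private lemma padicAux_zero_measure (hμ : μ {x : ℚ_[p] | ‖x‖ ≤ 1} = 1) :
    μ {(0:ℚ_[p])} = 0 := by
  have hb : ∀ m : ℕ, μ {(0:ℚ_[p])} ≤ ((p:ENNReal)⁻¹)^m := by
    intro m
    have hsub : ({(0:ℚ_[p])} : Set ℚ_[p]) ⊆ {x : ℚ_[p] | ‖x‖ ≤ (p:ℝ)^(-(m:ℤ))} := by
      intro x hx
      simp only [Set.mem_singleton_iff] at hx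
      simp [hx, zpow_nonneg (padicAux_pos p).le]
    calc μ {(0:ℚ_[p])} ≤ μ {x : ℚ_[p] | ‖x‖ ≤ (p:ℝ)^(-(m:ℤ))} := measure_mono hsub
      _ = (p:ENNReal)^(-(m:ℤ)) := padicAux_ball_measure p μ hμ _
      _ = ((p:ENNReal)⁻¹)^m := by
          rw [ENNReal.zpow_neg,
            zpow_natCast, ENNReal.inv_pow]
  have htend : Filter.Tendsto (fun m : ℕ => ((p:ENNReal)⁻¹)^m) Filter.atTop (nhds 0) := by
    apply ENNReal.tendsto_pow_atTop_nhds_zero_of_lt_one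
    rw [ENNReal.inv_lt_one]
    exact_mod_cast hp.out.one_lt
  exact le_antisymm (ge_of_tendsto' htend hb) (zero_le)

private lemma padicAux_cast (j : ℤ) :
    ((p:ENNReal))^j = ENNReal.ofReal ((p:ℝ)^j) := by
  have hq0 : (0:ℝ) < p := padicAux_pos p
  have hp0 : (p:ENNReal) ≠ 0 := by exact_mod_cast hp.out.pos.ne'
  have hptop : (p:ENNReal) ≠ ⊤ := ENNReal.natCast_ne_top p
  obtain ⟨n, rfl | rfl⟩ := j.eq_nat_or_neg
  · rw [zpow_natCast, zpow_natCast, ENNReal.ofReal_pow hq0.le, ENNReal.ofReal_natCast]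
  · rw [ENNReal.zpow_neg, zpow_natCast, zpow_neg, zpow_natCast,
      ENNReal.ofReal_inv_of_pos (pow_pos hq0 n), ENNReal.ofReal_pow hq0.le,
      ENNReal.ofReal_natCast]

private lemma padicAux_sphere_measure (hμ : μ {x : ℚ_[p] | ‖x‖ ≤ 1} = 1) (m : ℤ) :
    μ {x : ℚ_[p] | ‖x‖ = (p:ℝ)^m} = ENNReal.ofReal ((p:ℝ)^m - (p:ℝ)^(m-1)) := by
  have hq1 : (1:ℝ) < p := padicAux_one_lt p
  have hq0 : (0:ℝ) < p := padicAux_pos p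
  have hset : {x : ℚ_[p] | ‖x‖ = (p:ℝ)^m}
      = {x : ℚ_[p] | ‖x‖ ≤ (p:ℝ)^m} \ {x : ℚ_[p] | ‖x‖ ≤ (p:ℝ)^(m-1)} := by
    ext x
    simp only [Set.mem_setOf_eq, Set.mem_diff, not_le]
    constructor
    · intro h
      exact ⟨le_of_eq h, h ▸ zpow_lt_zpow_right₀ hq1 (by omega)⟩
    · rintro ⟨h1, h2⟩
      have hx0 : x ≠ 0 := by
        intro h
        rw [h, norm_zero] at h2
        exact absurd h2 (not_lt.mpr (zpow_nonneg hq0.le _))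
      obtain hval := Padic.norm_eq_zpow_neg_valuation hx0
      rw [hval] at h1 h2 ⊢
      congr 1
      have hlt : m - 1 < -x.valuation := by
        by_contra hcon
        exact absurd (zpow_le_zpow_right₀ hq1.le (not_lt.mp hcon)) (not_le.mpr h2)
      have hle : -x.valuation ≤ m := by
        by_contra hcon
        exact absurd h1 (not_le.mpr (zpow_lt_zpow_right₀ hq1 (not_le.mp hcon)))
      omega
  rw [hset]
  have hsub2 : {x : ℚ_[p] | ‖x‖ ≤ (p:ℝ)^(m-1)} ⊆ {x : ℚ_[p] | ‖x‖ ≤ (p:ℝ)^m} :=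
    fun x hx => le_trans hx (zpow_le_zpow_right₀ hq1.le (by omega))
  have hfin : μ {x : ℚ_[p] | ‖x‖ ≤ (p:ℝ)^(m-1)} ≠ ⊤ := by
    rw [padicAux_ball_measure p μ hμ]
    exact (ENNReal.zpow_lt_top (by exact_mod_cast hp.out.pos.ne')
      (ENNReal.natCast_ne_top p) _).ne
  rw [measure_diff hsub2 (padicAux_ball_measurable p _).nullMeasurableSet hfin,
    padicAux_ball_measure p μ hμ, padicAux_ball_measure p μ hμ,
    padicAux_cast p, padicAux_cast p, ← ENNReal.ofReal_sub _ (zpow_nonneg hq0.le _)]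

end PadicHaarMeasure

theorem padic_integral_norm_rpow
    (p : ℕ) [Fact p.Prime]
    [MeasurableSpace ℚ_[p]] [BorelSpace ℚ_[p]]
    (μ : Measure ℚ_[p]) [μ.IsAddHaarMeasure]
    (hμ : μ {x : ℚ_[p] | ‖x‖ ≤ 1} = 1)
    (α : ℝ) (hα : 0 < α) (n : ℤ) :
    ∫ x in {x : ℚ_[p] | ‖x‖ ≤ (p : ℝ) ^ n}, ‖x‖ ^ (α - 1) ∂μ
      = (1 - (p : ℝ)⁻¹) / (1 - (p : ℝ) ^ (-α)) * (p : ℝ) ^ (α * n) := by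
  have hq1 : (1:ℝ) < p := padicAux_one_lt p
  have hq0 : (0:ℝ) < p := padicAux_pos p
  set S : ℕ → Set ℚ_[p] := fun k => {x : ℚ_[p] | ‖x‖ = (p:ℝ)^(n - (k:ℤ))} with hS
  have hSmeas : ∀ k, MeasurableSet (S k) :=
    fun k => measurableSet_eq_fun measurable_norm measurable_const
  have hSdisj : Pairwise (Function.onFun Disjoint S) := by
    intro a b hab
    rw [Function.onFun, Set.disjoint_left]
    intro x hxa hxb
    simp only [hS, Set.mem_setOf_eq] at hxa hxb
    have h := zpow_right_injective₀ hq0 (ne_of_gt hq1) (hxa.symm.trans hxb)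
    have : (a:ℤ) = b := by omega
    exact hab (by exact_mod_cast this)
  have hUnion : {x : ℚ_[p] | ‖x‖ ≤ (p:ℝ)^n} \ {0} = ⋃ k : ℕ, S k := by
    ext x
    simp only [Set.mem_diff, Set.mem_setOf_eq, Set.mem_singleton_iff, Set.mem_iUnion, hS]
    constructor
    · rintro ⟨hle, hx0⟩
      have hval := Padic.norm_eq_zpow_neg_valuation hx0
      have hvle : -x.valuation ≤ n := by
        by_contra hcon
        rw [hval] at hle
        exact absurd hle (not_le.mpr (zpow_lt_zpow_right₀ hq1 (not_le.mp hcon)))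
      refine ⟨(n + x.valuation).toNat, ?_⟩
      rw [hval]
      congr 1
      have := Int.toNat_of_nonneg (by omega : (0:ℤ) ≤ n + x.valuation)
      omega
    · rintro ⟨k, hk⟩
      constructor
      · exact hk.le.trans (zpow_le_zpow_right₀ hq1.le (by omega))
      · intro h0
        rw [h0, norm_zero] at hk
        exact absurd hk.symm (ne_of_gt (zpow_pos hq0 _))
  have hae : {x : ℚ_[p] | ‖x‖ ≤ (p:ℝ)^n} =ᵐ[μ] ⋃ k : ℕ, S k := by
    rw [← hUnion]
    apply MeasureTheory.ae_eq_set.mpr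
    constructor
    · refine measure_mono_null ?_ (padicAux_zero_measure p μ hμ)
      intro x hx
      simp only [Set.mem_diff, Set.mem_singleton_iff, not_and, not_not] at hx ⊢
      exact hx.2 hx.1
    · refine measure_mono_null ?_ (measure_empty (μ := μ))
      intro x hx
      simp only [Set.mem_diff, Set.mem_singleton_iff] at hx
      exact absurd hx.1.1 hx.2
  have hfm : Measurable (fun x : ℚ_[p] => ‖x‖ ^ (α - 1)) :=
    measurable_norm.pow measurable_const
  have hnn : ∀ x : ℚ_[p], 0 ≤ ‖x‖ ^ (α - 1) :=
    fun x => Real.rpow_nonneg (norm_nonneg x) _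
  have hsph : ∀ k : ℕ, ∫⁻ x in S k, ENNReal.ofReal (‖x‖ ^ (α - 1)) ∂μ
      = ENNReal.ofReal
          (((p:ℝ)^(n - (k:ℤ)))^(α-1) * ((p:ℝ)^(n-(k:ℤ)) - (p:ℝ)^(n-(k:ℤ)-1))) := by
    intro k
    rw [setLIntegral_congr_fun (hSmeas k) (
      (fun x hx => by
        simp only [hS, Set.mem_setOf_eq] at hx
        rw [hx] : ∀ x ∈ S k, ENNReal.ofReal (‖x‖ ^ (α - 1))
          = ENNReal.ofReal (((p:ℝ)^(n - (k:ℤ)))^(α-1))))]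
    rw [setLIntegral_const, padicAux_sphere_measure p μ hμ,
      ← ENNReal.ofReal_mul (Real.rpow_nonneg (zpow_nonneg hq0.le _) _)]
  set r : ℝ := (p:ℝ) ^ (-α) with hr
  have hr0 : 0 ≤ r := Real.rpow_nonneg hq0.le _
  have hr1 : r < 1 := Real.rpow_lt_one_of_one_lt_of_neg hq1 (neg_lt_zero.mpr hα)
  set C : ℝ := (1 - (p:ℝ)⁻¹) * (p:ℝ) ^ (α * (n:ℝ)) with hC
  have hC0 : 0 ≤ C := mul_nonneg (by rw [sub_nonneg, inv_le_one_iff₀]; right; exact hq1.le)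
    (Real.rpow_nonneg hq0.le _)
  have hterm : ∀ k : ℕ,
      ((p:ℝ)^(n - (k:ℤ)))^(α-1) * ((p:ℝ)^(n-(k:ℤ)) - (p:ℝ)^(n-(k:ℤ)-1)) = C * r ^ k := by
    intro k
    set m : ℤ := n - (k:ℤ) with hm
    have hqm : (0:ℝ) < (p:ℝ)^m := zpow_pos hq0 _
    have h1 : (p:ℝ)^(m-1) = (p:ℝ)^m * (p:ℝ)⁻¹ := zpow_sub_one₀ hq0.ne' m
    have h2 : ((p:ℝ)^m)^(α-1) * ((p:ℝ)^m)^(1:ℝ) = ((p:ℝ)^m)^α := by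
      rw [← Real.rpow_add hqm]; norm_num
    have h2' : ((p:ℝ)^m)^(1:ℝ) = (p:ℝ)^m := Real.rpow_one _
    have h3 : (p:ℝ) ^ (α * (n:ℝ)) * r ^ k = ((p:ℝ)^m)^α := by
      rw [hr, ← Real.rpow_natCast ((p:ℝ)^(-α)) k, ← Real.rpow_mul hq0.le,
        ← Real.rpow_add hq0, ← Real.rpow_intCast (p:ℝ) m, ← Real.rpow_mul hq0.le]
      congr 1
      push_cast [hm]
      ring
    calc ((p:ℝ)^m)^(α-1) * ((p:ℝ)^m - (p:ℝ)^(m-1))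
        = (((p:ℝ)^m)^(α-1) * ((p:ℝ)^m)^(1:ℝ)) * (1 - (p:ℝ)⁻¹) := by rw [h2', h1]; ring
      _ = ((p:ℝ)^m)^α * (1 - (p:ℝ)⁻¹) := by rw [h2]
      _ = C * r ^ k := by rw [← h3, hC]; ring
  have hsum : Summable (fun k : ℕ => C * r ^ k) :=
    (summable_geometric_of_lt_one hr0 hr1).mul_left C
  have hR0 : 0 ≤ (1 - (p:ℝ)⁻¹) / (1 - (p:ℝ) ^ (-α)) * (p:ℝ) ^ (α * (n:ℝ)) := by
    apply mul_nonneg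
    · apply div_nonneg
      · rw [sub_nonneg, inv_le_one_iff₀]; right; exact hq1.le
      · rw [sub_nonneg]; exact hr1.le
    · exact Real.rpow_nonneg hq0.le _
  have hlint : ∫⁻ x in {x : ℚ_[p] | ‖x‖ ≤ (p:ℝ)^n}, ENNReal.ofReal (‖x‖ ^ (α - 1)) ∂μ
      = ENNReal.ofReal ((1 - (p:ℝ)⁻¹) / (1 - (p:ℝ) ^ (-α)) * (p:ℝ) ^ (α * (n:ℝ))) := by
    rw [setLIntegral_congr hae, lintegral_iUnion hSmeas hSdisj, tsum_congr hsph]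
    calc ∑' k : ℕ, ENNReal.ofReal
          (((p:ℝ)^(n - (k:ℤ)))^(α-1) * ((p:ℝ)^(n-(k:ℤ)) - (p:ℝ)^(n-(k:ℤ)-1)))
        = ∑' k : ℕ, ENNReal.ofReal (C * r ^ k) := tsum_congr (fun k => by rw [hterm k])
      _ = ENNReal.ofReal (∑' k : ℕ, C * r ^ k) :=
          (ENNReal.ofReal_tsum_of_nonneg (fun k => mul_nonneg hC0 (pow_nonneg hr0 k)) hsum).symm
      _ = ENNReal.ofReal (C * (1 - r)⁻¹) := by rw [tsum_mul_left, tsum_geometric_of_lt_one hr0 hr1]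
      _ = ENNReal.ofReal ((1 - (p:ℝ)⁻¹) / (1 - (p:ℝ) ^ (-α)) * (p:ℝ) ^ (α * (n:ℝ))) := by
          congr 1
          rw [hC, hr]
          field_simp
  rw [integral_eq_lintegral_of_nonneg_ae (ae_of_all _ hnn)
    (hfm.aestronglyMeasurable), hlint, ENNReal.toReal_ofReal hR0]
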